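/- For two neighboring nodes u and v in a tree with n nodes, the rumor centralities satisfy R(u) = R(v) · |T_u^v| / (n − |T_u^v|), where T_u^v is the subtree rooted at u when the tree is rooted at v. -/

import Mathlib

/-- `subtreeSet G u v` is the set of vertices `w` such that every walk from `v` to `w`
passes through `u`; in a tree this is the subtree `T_u^v` rooted at `u` when the tree is
rooted at `v`. -/
def subtreeSet {V : Type*} (G : SimpleGraph V) (u v : V) : Set V :=
  {w | ∀ p : G.Walk v w, u ∈ p.support}

/-- Rumor centrality `R(s, G_n) = n! · ∏_{u} 1 / |T_u^s|`. -/
noncomputable def rumorCentrality {V : Type*} [Fintype V] (G : SimpleGraph V) (s : V) : ℚ :=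
  (Nat.factorial (Fintype.card V) : ℚ) * ∏ u : V, 1 / ((subtreeSet G u s).ncard : ℚ)

private lemma mem_subtreeSet_self {V : Type*} (G : SimpleGraph V) (u v : V) :
    u ∈ subtreeSet G u v := fun p => p.end_mem_support

private lemma subtreeSet_self {V : Type*} (G : SimpleGraph V) (s : V) :
    subtreeSet G s s = Set.univ :=
  Set.eq_univ_of_forall fun _ p => p.start_mem_support

private lemma subtree_mono {V : Type*} {G : SimpleGraph V} {u v w : V} (huv : G.Adj u v)
    (hw : w ≠ u) : subtreeSet G w u ⊆ subtreeSet G w v := by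
  intro x hx p
  have h := hx (SimpleGraph.Walk.cons huv p)
  rw [SimpleGraph.Walk.support_cons, List.mem_cons] at h
  exact h.resolve_left hw

private lemma subtree_eq {V : Type*} {G : SimpleGraph V} {u v w : V} (huv : G.Adj u v)
    (hwu : w ≠ u) (hwv : w ≠ v) : subtreeSet G w u = subtreeSet G w v :=
  Set.Subset.antisymm (subtree_mono huv hwu) (subtree_mono huv.symm hwv)

private lemma mem_subtreeSet_iff {V : Type*} {G : SimpleGraph V} (hG : G.IsAcyclic)
    {u v x : V} (P : G.Path v x) : x ∈ subtreeSet G u v ↔ u ∈ (P : G.Walk v x).support := by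
  classical
  constructor
  · intro hx
    exact hx P
  · intro hu q
    have hq : q.toPath = P := hG.path_unique _ _
    have : u ∈ (q.toPath : G.Walk v x).support := by rw [hq]; exact hu
    exact q.support_toPath_subset this

private lemma subtree_compl {V : Type*} {G : SimpleGraph V} (hG : G.IsTree) {u v : V}
    (huv : G.Adj u v) : subtreeSet G v u = (subtreeSet G u v)ᶜ := by
  classical
  ext x
  obtain ⟨p₀⟩ := hG.isConnected.preconnected v x
  set P : G.Path v x := p₀.toPath with hP
  obtain ⟨q₀⟩ := hG.isConnected.preconnected u x
  set Q : G.Path u x := q₀.toPath with hQ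
  rw [Set.mem_compl_iff, mem_subtreeSet_iff hG.IsAcyclic Q,
    mem_subtreeSet_iff hG.IsAcyclic P]
  constructor
  · -- v ∈ Q.support → u ∉ P.support
    intro hv hu
    -- the path from u to x is the suffix of P from u
    have hQ' : (P : G.Walk v x).dropUntil u hu |>.IsPath := P.2.dropUntil hu
    have hQeq : (Q : G.Walk u x) = (P : G.Walk v x).dropUntil u hu := by
      have := hG.IsAcyclic.path_unique Q ⟨_, hQ'⟩
      rw [this]
    rw [hQeq] at hv
    -- v appears both in takeUntil (as start) and in dropUntil, contradicting nodup
    have hnodup : ((P : G.Walk v x).support).Nodup := P.2.support_nodup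
    have hsplit := (P : G.Walk v x).take_spec hu
    rw [← hsplit, SimpleGraph.Walk.support_append] at hnodup
    have hdisj := List.disjoint_of_nodup_append hnodup
    have hv1 : v ∈ ((P : G.Walk v x).takeUntil u hu).support :=
      SimpleGraph.Walk.start_mem_support _
    have hv2 : v ∈ ((P : G.Walk v x).dropUntil u hu).support.tail := by
      have := SimpleGraph.Walk.support_eq_cons ((P : G.Walk v x).dropUntil u hu)
      rw [this, List.mem_cons] at hv
      exact hv.resolve_left huv.ne'
    exact hdisj hv1 hv2
  · -- u ∉ P.support → v ∈ Q.support
    intro hu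
    have hQ' : (SimpleGraph.Walk.cons huv (P : G.Walk v x)).IsPath := P.2.cons hu
    have hQeq : (Q : G.Walk u x) = SimpleGraph.Walk.cons huv (P : G.Walk v x) := by
      have := hG.IsAcyclic.path_unique Q ⟨_, hQ'⟩
      rw [this]
    rw [hQeq, SimpleGraph.Walk.support_cons, List.mem_cons]
    exact Or.inr ((P : G.Walk v x).start_mem_support)

/-- For two neighboring nodes `u` and `v` in a tree on `n` nodes,
`R(u) = R(v) · |T_u^v| / (n − |T_u^v|)`. -/
theorem rumorCentrality_adj {V : Type*} [Fintype V] (G : SimpleGraph V) (hG : G.IsTree)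
    (u v : V) (huv : G.Adj u v) :
    rumorCentrality G u =
      rumorCentrality G v * ((subtreeSet G u v).ncard : ℚ) /
        ((Fintype.card V : ℚ) - ((subtreeSet G u v).ncard : ℚ)) := by
  classical
  set n := Fintype.card V with hn
  set a := (subtreeSet G u v).ncard with ha
  set b := (subtreeSet G v u).ncard with hb
  have hab : a + b = n := by
    rw [hb, subtree_compl hG huv, ha]
    rw [Set.ncard_add_ncard_compl, Nat.card_eq_fintype_card]
  have hapos : 0 < a := by
    rw [ha, Set.ncard_pos]
    exact ⟨u, mem_subtreeSet_self G u v⟩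
  have hbpos : 0 < b := by
    rw [hb, Set.ncard_pos]
    exact ⟨v, mem_subtreeSet_self G v u⟩
  -- split products
  have hsplit : ∀ s : V, (∏ w : V, 1 / ((subtreeSet G w s).ncard : ℚ)) =
      (1 / ((subtreeSet G u s).ncard : ℚ)) * (1 / ((subtreeSet G v s).ncard : ℚ)) *
        ∏ w ∈ ({u, v} : Finset V)ᶜ, 1 / ((subtreeSet G w s).ncard : ℚ) := by
    intro s
    rw [← Finset.prod_mul_prod_compl ({u, v} : Finset V), Finset.prod_pair huv.ne]
  have hC : (∏ w ∈ ({u, v} : Finset V)ᶜ, 1 / ((subtreeSet G w u).ncard : ℚ)) =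
      ∏ w ∈ ({u, v} : Finset V)ᶜ, 1 / ((subtreeSet G w v).ncard : ℚ) := by
    apply Finset.prod_congr rfl
    intro w hw
    simp only [Finset.mem_compl, Finset.mem_insert, Finset.mem_singleton, not_or] at hw
    rw [subtree_eq huv hw.1 hw.2]
  have huu : (subtreeSet G u u).ncard = n := by
    rw [subtreeSet_self, Set.ncard_univ, Nat.card_eq_fintype_card]
  have hvv : (subtreeSet G v v).ncard = n := by
    rw [subtreeSet_self, Set.ncard_univ, Nat.card_eq_fintype_card]
  rw [rumorCentrality, rumorCentrality, hsplit u, hsplit v, hC, huu, hvv]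
  set C := ∏ w ∈ ({u, v} : Finset V)ᶜ, 1 / ((subtreeSet G w v).ncard : ℚ)
  have hvu : (subtreeSet G v u).ncard = b := rfl
  have haQ : ((a : ℚ)) ≠ 0 := by positivity
  have hbQ : ((b : ℚ)) ≠ 0 := by positivity
  have hnQ : ((n : ℚ)) ≠ 0 := by
    have : 0 < n := by omega
    positivity
  have hba : ((n : ℚ)) - (a : ℚ) = (b : ℚ) := by
    have : (a : ℚ) + (b : ℚ) = (n : ℚ) := by exact_mod_cast congrArg Nat.cast hab
    linarith
  rw [hba]
  field_simp
  rw [← hb, ← ha, mul_div_cancel_right₀ C hbQ, mul_div_cancel_right₀ C haQ]
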